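/- arXiv:2507.07353 — 2 statements merged into one kernel-verified Lean document; each statement's English description precedes it below -/
import Mathlib

section
/- Pointwise bound on the gain term (Lemma 2.1, inequality (gamma_upper)). Let 0 < ϑ < 1/4 and w(v) := e^{ϑ|v|²}. There exists a constant C = C(ϑ) > 0 such that for every measurable g : ℝ³ → ℝ with ‖wg‖_∞ := ess sup_v |w(v)g(v)| < ∞ and every v ∈ ℝ³, the integral Γ_gain(g,g)(v) converges absolutely and |Γ_gain(g,g)(v)| ≤ C ‖wg‖_∞². -/
open MeasureTheory Set
open scoped RealInnerProductSpace

noncomputable section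

abbrev E3 : Type := EuclideanSpace ℝ (Fin 3)

/-- Surface measure on the unit sphere `S² ⊂ ℝ³`: the two-dimensional Hausdorff measure
restricted to the sphere. -/
def sphMeas : Measure E3 := (μH[(2 : ℝ)]).restrict (Metric.sphere (0 : E3) 1)

/-- The Japanese bracket `⟨v⟩ = √(1+|v|²)`. -/
def jap (v : E3) : ℝ := Real.sqrt (1 + ‖v‖ ^ 2)

/-- The hard-sphere collision frequency
`ν(g)(v) = ∫_{ℝ³}∫_{S²₊} |(v−u)·ω| e^{−|u|²/4} g(u) dω du`. -/
def nuOp (g : E3 → ℝ) (v : E3) : ℝ :=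
  ∫ u : E3, ∫ ω in {ω : E3 | 0 < ⟪v - u, ω⟫},
    |⟪v - u, ω⟫| * Real.exp (-(‖u‖ ^ 2 / 4)) * g u ∂sphMeas

/-- The hard-sphere gain operator
`Γ_gain(g,g)(v) = e^{|v|²/4} ∫_{ℝ³}∫_{S²₊} |(v−u)·ω| e^{−|u'|²/4} g(u') e^{−|v'|²/4} g(v') dω du`
with `u' = u + ((v−u)·ω)ω` and `v' = v − ((v−u)·ω)ω`. -/
def gainOp (g : E3 → ℝ) (v : E3) : ℝ :=
  Real.exp (‖v‖ ^ 2 / 4) *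
    ∫ u : E3, ∫ ω in {ω : E3 | 0 < ⟪v - u, ω⟫},
      |⟪v - u, ω⟫|
        * Real.exp (-(‖u + ⟪v - u, ω⟫ • ω‖ ^ 2 / 4)) * g (u + ⟪v - u, ω⟫ • ω)
        * Real.exp (-(‖v - ⟪v - u, ω⟫ • ω‖ ^ 2 / 4)) * g (v - ⟪v - u, ω⟫ • ω) ∂sphMeas

/-! ### Auxiliary lemmas -/

section Aux

lemma GainAux.sinLip (a b : ℝ) : |Real.sin a - Real.sin b| ≤ |a - b| := by
  rw [Real.sin_sub_sin, abs_mul, abs_mul, abs_two]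
  have h1 : |Real.sin ((a - b)/2)| ≤ |(a - b)/2| := Real.abs_sin_le_abs
  have h2 : |Real.cos ((a + b)/2)| ≤ 1 := Real.abs_cos_le_one _
  have h3 : |(a-b)/2| = |a-b|/2 := by rw [abs_div, abs_two]
  nlinarith [abs_nonneg (Real.sin ((a - b)/2)), abs_nonneg ((a-b)/2), abs_nonneg (a-b)]

lemma GainAux.cosLip (a b : ℝ) : |Real.cos a - Real.cos b| ≤ |a - b| := by
  rw [Real.cos_sub_cos, abs_mul, abs_mul, abs_neg, abs_two]
  have h1 : |Real.sin ((a - b)/2)| ≤ |(a - b)/2| := Real.abs_sin_le_abs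
  have h2 : |Real.sin ((a + b)/2)| ≤ 1 := Real.abs_sin_le_one _
  have h3 : |(a-b)/2| = |a-b|/2 := by rw [abs_div, abs_two]
  nlinarith [abs_nonneg (Real.sin ((a - b)/2)), abs_nonneg ((a-b)/2), abs_nonneg (a-b),
    abs_nonneg (Real.sin ((a+b)/2))]

lemma GainAux.bound9 (s : ℝ) (hs : 0 ≤ s) : (1 + s) * Real.exp (-(s/8)) ≤ 9 := by
  have h1 : s/8 + 1 ≤ Real.exp (s/8) := Real.add_one_le_exp _
  have h2 : Real.exp (-(s/8)) * Real.exp (s/8) = 1 := by rw [← Real.exp_add]; simp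
  have h3 : (0:ℝ) < Real.exp (-(s/8)) := Real.exp_pos _
  nlinarith [mul_le_mul_of_nonneg_left h1 h3.le]

lemma GainAux.boundTheta (c s : ℝ) (hc : 0 < c) (hs : 0 ≤ s) :
    (1 + s) * Real.exp (-(c * s)) ≤ (c + 1)/c := by
  rw [le_div_iff₀ hc]
  have h1 : c*s + 1 ≤ Real.exp (c*s) := Real.add_one_le_exp _
  have h2 : Real.exp (-(c*s)) * Real.exp (c*s) = 1 := by rw [← Real.exp_add]; simp
  have h3 : (0:ℝ) < Real.exp (-(c*s)) := Real.exp_pos _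
  nlinarith [mul_le_mul_of_nonneg_left h1 h3.le, mul_nonneg (mul_nonneg hc.le hs) h3.le]

lemma GainAux.boundU (s : ℝ) (hs : 0 ≤ s) :
    (1 + s) * Real.exp (-(s/4)) ≤ 9 * Real.exp (-(s/8)) := by
  have h : Real.exp (-(s/4)) = Real.exp (-(s/8)) * Real.exp (-(s/8)) := by
    rw [← Real.exp_add]; ring_nf
  rw [h, ← mul_assoc]
  have := GainAux.bound9 s hs
  have h3 : (0:ℝ) ≤ Real.exp (-(s/8)) := (Real.exp_pos _).le
  nlinarith

/-- Energy conservation for hard-sphere collisions. -/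
lemma GainAux.energy (u v ω : E3) (hω : ‖ω‖ = 1) :
    ‖u + ⟪v - u, ω⟫ • ω‖ ^ 2 + ‖v - ⟪v - u, ω⟫ • ω‖ ^ 2 = ‖u‖ ^ 2 + ‖v‖ ^ 2 := by
  have h1 : ‖u + ⟪v - u, ω⟫ • ω‖ ^ 2
      = ‖u‖ ^ 2 + 2 * (⟪v - u, ω⟫ * ⟪u, ω⟫) + ⟪v - u, ω⟫ ^ 2 := by
    rw [norm_add_sq_real, real_inner_smul_right, norm_smul, hω, mul_one, Real.norm_eq_abs, sq_abs]
  have h2 : ‖v - ⟪v - u, ω⟫ • ω‖ ^ 2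
      = ‖v‖ ^ 2 - 2 * (⟪v - u, ω⟫ * ⟪v, ω⟫) + ⟪v - u, ω⟫ ^ 2 := by
    rw [norm_sub_sq_real, real_inner_smul_right, norm_smul, hω, mul_one, Real.norm_eq_abs, sq_abs]
  have h3 : ⟪v - u, ω⟫ = ⟪v, ω⟫ - ⟪u, ω⟫ := inner_sub_left _ _ _
  rw [h1, h2, h3]; ring

/-- Spherical-coordinates parametrization of the unit sphere. -/
def GainAux.sphParam : (Fin 2 → ℝ) → E3 := fun p =>
  (WithLp.equiv 2 (Fin 3 → ℝ)).symm
    ![Real.sin (p 0) * Real.cos (p 1), Real.sin (p 0) * Real.sin (p 1), Real.cos (p 0)]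

lemma GainAux.sphParam_lip : LipschitzWith 4 GainAux.sphParam := by
  apply LipschitzWith.of_dist_le_mul
  intro p q
  suffices h : dist (GainAux.sphParam p) (GainAux.sphParam q) ≤ 4 * dist p q by
    simpa using h
  have hd0 : |p 0 - q 0| ≤ dist p q := by rw [← Real.dist_eq]; exact dist_le_pi_dist p q 0
  have hd1 : |p 1 - q 1| ≤ dist p q := by rw [← Real.dist_eq]; exact dist_le_pi_dist p q 1
  have comp : ∀ i : Fin 3, dist (GainAux.sphParam p i) (GainAux.sphParam q i) ≤ 2 * dist p q := by
    intro i
    fin_cases i <;>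
      simp only [GainAux.sphParam, WithLp.equiv_symm_apply, PiLp.toLp_apply, Matrix.cons_val_zero,
        Matrix.cons_val_one, Matrix.head_cons, Matrix.cons_val_two, Matrix.tail_cons,
        Real.dist_eq, Fin.isValue]
    · calc |Real.sin (p 0) * Real.cos (p 1) - Real.sin (q 0) * Real.cos (q 1)|
          = |(Real.sin (p 0) - Real.sin (q 0)) * Real.cos (p 1)
              + Real.sin (q 0) * (Real.cos (p 1) - Real.cos (q 1))| := by ring_nf
        _ ≤ |(Real.sin (p 0) - Real.sin (q 0)) * Real.cos (p 1)|
              + |Real.sin (q 0) * (Real.cos (p 1) - Real.cos (q 1))| := abs_add_le _ _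
        _ ≤ 2 * dist p q := by
            rw [abs_mul, abs_mul]
            have := GainAux.sinLip (p 0) (q 0); have := GainAux.cosLip (p 1) (q 1)
            have := Real.abs_cos_le_one (p 1); have := Real.abs_sin_le_one (q 0)
            nlinarith [abs_nonneg (Real.sin (p 0) - Real.sin (q 0)),
              abs_nonneg (Real.cos (p 1) - Real.cos (q 1)), abs_nonneg (Real.sin (q 0)),
              abs_nonneg (Real.cos (p 1)), hd0, hd1, abs_nonneg (p 0 - q 0), abs_nonneg (p 1 - q 1)]
    · calc |Real.sin (p 0) * Real.sin (p 1) - Real.sin (q 0) * Real.sin (q 1)|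
          = |(Real.sin (p 0) - Real.sin (q 0)) * Real.sin (p 1)
              + Real.sin (q 0) * (Real.sin (p 1) - Real.sin (q 1))| := by ring_nf
        _ ≤ |(Real.sin (p 0) - Real.sin (q 0)) * Real.sin (p 1)|
              + |Real.sin (q 0) * (Real.sin (p 1) - Real.sin (q 1))| := abs_add_le _ _
        _ ≤ 2 * dist p q := by
            rw [abs_mul, abs_mul]
            have := GainAux.sinLip (p 0) (q 0); have := GainAux.sinLip (p 1) (q 1)
            have := Real.abs_sin_le_one (p 1); have := Real.abs_sin_le_one (q 0)
            nlinarith [abs_nonneg (Real.sin (p 0) - Real.sin (q 0)),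
              abs_nonneg (Real.sin (p 1) - Real.sin (q 1)), abs_nonneg (Real.sin (q 0)),
              abs_nonneg (Real.sin (p 1)), hd0, hd1, abs_nonneg (p 0 - q 0), abs_nonneg (p 1 - q 1)]
    · calc |Real.cos (p 0) - Real.cos (q 0)| ≤ |p 0 - q 0| := GainAux.cosLip _ _
        _ ≤ 2 * dist p q := by nlinarith [dist_nonneg (x := p) (y := q)]
  rw [EuclideanSpace.dist_eq]
  have hsum : ∑ i, dist (GainAux.sphParam p i) (GainAux.sphParam q i) ^ 2
      ≤ ∑ _i : Fin 3, (2 * dist p q)^2 :=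
    Finset.sum_le_sum fun i _ => pow_le_pow_left₀ dist_nonneg (comp i) 2
  have h2 : ∑ _i : Fin 3, (2 * dist p q)^2 = 3 * (2 * dist p q)^2 := by
    simp [Finset.sum_const]
  calc Real.sqrt (∑ i, dist (GainAux.sphParam p i) (GainAux.sphParam q i) ^ 2)
      ≤ Real.sqrt ((4 * dist p q)^2) := by
        apply Real.sqrt_le_sqrt
        rw [h2] at hsum
        nlinarith [sq_nonneg (dist p q), dist_nonneg (x := p) (y := q)]
    _ = 4 * dist p q := Real.sqrt_sq (by positivity)

lemma GainAux.sphere_subset_image :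
    Metric.sphere (0 : E3) 1
      ⊆ GainAux.sphParam '' (Set.univ.pi fun _ : Fin 2 => Icc (-4:ℝ) 4) := by
  intro x hx
  have hxn : ‖x‖ = 1 := mem_sphere_zero_iff_norm.mp hx
  have hsum : x 0 ^ 2 + x 1 ^ 2 + x 2 ^ 2 = 1 := by
    have hn := EuclideanSpace.norm_eq x
    rw [hxn] at hn
    have h0 : (0:ℝ) ≤ ∑ i, ‖x i‖ ^ 2 := Finset.sum_nonneg fun i _ => sq_nonneg _
    have : ∑ i, ‖x i‖ ^ 2 = 1 := by nlinarith [Real.sq_sqrt h0]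
    simpa [Fin.sum_univ_three, Real.norm_eq_abs, sq_abs] using this
  have hx2a : -1 ≤ x 2 := by nlinarith [sq_nonneg (x 0), sq_nonneg (x 1), sq_nonneg (x 2 + 1)]
  have hx2b : x 2 ≤ 1 := by nlinarith [sq_nonneg (x 0), sq_nonneg (x 1), sq_nonneg (x 2 - 1)]
  set z : ℂ := ⟨x 0, x 1⟩ with hz
  refine ⟨![Real.arccos (x 2), Complex.arg z], ?_, ?_⟩
  · intro i _
    fin_cases i <;> simp only [Fin.mk_zero, Fin.mk_one, Fin.isValue, Matrix.cons_val_zero,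
      Matrix.cons_val_one, Matrix.head_cons, mem_Icc] <;> constructor
    · linarith [Real.arccos_nonneg (x 2)]
    · linarith [Real.arccos_le_pi (x 2), Real.pi_le_four]
    · linarith [Complex.neg_pi_lt_arg z, Real.pi_le_four]
    · linarith [Complex.arg_le_pi z, Real.pi_le_four]
  · have habs : ‖z‖ = Real.sqrt (x 0 ^ 2 + x 1 ^ 2) := by
      rw [Complex.norm_def, Complex.normSq_mk]; congr 1; ring
    have hsin : Real.sin (Real.arccos (x 2)) = ‖z‖ := by
      rw [Real.sin_arccos, habs]; congr 1; nlinarith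
    refine ((WithLp.equiv 2 (Fin 3 → ℝ)).symm_apply_eq.mpr ?_)
    funext i
    fin_cases i <;>
      simp only [GainAux.sphParam, Fin.mk_zero, Fin.mk_one, Fin.isValue, Matrix.cons_val_zero,
        Matrix.cons_val_one, Matrix.head_cons, Matrix.cons_val_two, Matrix.tail_cons,
        WithLp.equiv_apply]
    · rw [hsin, Complex.norm_mul_cos_arg]
    · rw [hsin, Complex.norm_mul_sin_arg]
    · rw [Real.cos_arccos hx2a hx2b]; rfl

lemma GainAux.sphMeas_univ_lt_top : sphMeas Set.univ < ⊤ := by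
  have h1 : sphMeas Set.univ = μH[(2:ℝ)] (Metric.sphere (0 : E3) 1) := by
    rw [sphMeas, Measure.restrict_apply_univ]
  rw [h1]
  have hH2 : (μH[(2:ℝ)] : Measure (Fin 2 → ℝ)) = volume := by
    simpa using (hausdorffMeasure_pi_real (ι := Fin 2))
  calc μH[(2:ℝ)] (Metric.sphere (0 : E3) 1)
      ≤ μH[(2:ℝ)] (GainAux.sphParam '' (Set.univ.pi fun _ : Fin 2 => Icc (-4:ℝ) 4)) :=
        measure_mono GainAux.sphere_subset_image
    _ ≤ (4 : NNReal) ^ (2:ℝ) * μH[(2:ℝ)] (Set.univ.pi fun _ : Fin 2 => Icc (-4:ℝ) 4) :=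
        GainAux.sphParam_lip.hausdorffMeasure_image_le (by norm_num) _
    _ < ⊤ := by
        rw [hH2]
        have hv : volume (Set.univ.pi fun _ : Fin 2 => Icc (-4:ℝ) 4)
            = (ENNReal.ofReal 8) ^ 2 := by
          rw [volume_pi_pi]
          norm_num [Real.volume_Icc]
        rw [hv]
        refine ENNReal.mul_lt_top ?_ ?_
        · exact ENNReal.rpow_lt_top_of_nonneg (by norm_num) (by simp)
        · exact ENNReal.pow_lt_top (by simp)

instance : IsFiniteMeasure sphMeas := ⟨GainAux.sphMeas_univ_lt_top⟩

lemma GainAux.integrable_gaussE3 {b : ℝ} (hb : 0 < b) :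
    Integrable (fun u : E3 => Real.exp (-(b * ‖u‖ ^ 2))) := by
  have h := GaussianFourier.integrable_cexp_neg_mul_sq_norm_add_of_euclideanSpace
    (b := (b : ℂ)) (by simpa using hb) 0 (0 : EuclideanSpace ℝ (Fin 3))
  have h2 := h.norm
  refine h2.congr (Filter.Eventually.of_forall fun u => ?_)
  have he : (-(b:ℂ) * (‖u‖:ℂ) ^ 2 + 0 * ((inner ℝ (0:E3) u : ℝ):ℂ))
      = ((-(b * ‖u‖^2) : ℝ) : ℂ) := by
    push_cast; ring
  simp only [he, Complex.norm_exp, Complex.ofReal_re]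

lemma GainAux.integrable_gauss8 :
    Integrable (fun u : E3 => Real.exp (-(‖u‖ ^ 2 / 8))) := by
  have h := GainAux.integrable_gaussE3 (b := 8⁻¹) (by norm_num)
  refine h.congr (Filter.Eventually.of_forall fun u => ?_)
  ring_nf

end Aux

set_option maxHeartbeats 1000000 in
/-- **Lemma 2.1, inequality (gamma_upper)** (pointwise bound on the gain term).
Let `0 < ϑ < 1/4` and `w v = e^{ϑ|v|²}`. There is `C = C(ϑ) > 0` such that for every
measurable `g` with `|w·g| ≤ M` and every `v`, the gain integral converges absolutely
(over the product of Lebesgue measure and the sphere measure) and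
`|Γ_gain(g,g)(v)| ≤ C M²`. -/
theorem gain_term_pointwise_bound (ϑ : ℝ) (hϑ0 : 0 < ϑ) (hϑ1 : ϑ < 1 / 4) :
    ∃ C > (0 : ℝ), ∀ (g : E3 → ℝ) (M : ℝ), Measurable g →
      (∀ u : E3, |Real.exp (ϑ * ‖u‖ ^ 2) * g u| ≤ M) →
      ∀ v : E3,
        Integrable
          ({p : E3 × E3 | 0 < ⟪v - p.1, p.2⟫}.indicator fun p =>
            |⟪v - p.1, p.2⟫|
              * Real.exp (-(‖p.1 + ⟪v - p.1, p.2⟫ • p.2‖ ^ 2 / 4))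
                * g (p.1 + ⟪v - p.1, p.2⟫ • p.2)
              * Real.exp (-(‖v - ⟪v - p.1, p.2⟫ • p.2‖ ^ 2 / 4))
                * g (v - ⟪v - p.1, p.2⟫ • p.2))
          ((volume : Measure E3).prod sphMeas)
        ∧ |gainOp g v| ≤ C * M ^ 2 := by
  classical
  set S : ℝ := (sphMeas Set.univ).toReal with hS
  have hS0 : 0 ≤ S := ENNReal.toReal_nonneg
  set A : ℝ := ∫ u : E3, Real.exp (-(‖u‖ ^ 2 / 8)) with hA
  have hA0 : 0 ≤ A := integral_nonneg fun u => (Real.exp_pos _).le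
  clear_value S A
  have hCv0 : (0:ℝ) < (ϑ + 1)/ϑ := by positivity
  refine ⟨S * (9 * A) * ((ϑ + 1)/ϑ) + 1, ?_, ?_⟩
  · have h9A : (0:ℝ) ≤ 9 * A := by linarith
    have := mul_nonneg (mul_nonneg hS0 h9A) hCv0.le
    linarith
  intro g M hg hgM v
  have hM0 : 0 ≤ M := le_trans (abs_nonneg _) (hgM 0)
  have hgabs : ∀ x : E3, |g x| ≤ M * Real.exp (-(ϑ * ‖x‖ ^ 2)) := by
    intro x
    have h2 := mul_le_mul_of_nonneg_right (hgM x) (Real.exp_pos (-(ϑ * ‖x‖ ^ 2))).le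
    calc |g x| = |Real.exp (ϑ * ‖x‖ ^ 2) * g x| * Real.exp (-(ϑ * ‖x‖ ^ 2)) := by
          rw [abs_mul, abs_of_pos (Real.exp_pos _), Real.exp_neg]
          field_simp
      _ ≤ M * Real.exp (-(ϑ * ‖x‖ ^ 2)) := h2
  -- key pointwise estimate
  have key : ∀ u ω : E3, ‖ω‖ = 1 →
      |(|⟪v - u, ω⟫| * Real.exp (-(‖u + ⟪v - u, ω⟫ • ω‖ ^ 2 / 4)) * g (u + ⟪v - u, ω⟫ • ω)
        * Real.exp (-(‖v - ⟪v - u, ω⟫ • ω‖ ^ 2 / 4)) * g (v - ⟪v - u, ω⟫ • ω))|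
      ≤ M ^ 2 * ((1 + ‖v‖ ^ 2) * Real.exp (-(ϑ * ‖v‖ ^ 2))) * Real.exp (-(‖v‖ ^ 2 / 4))
          * (9 * Real.exp (-(‖u‖ ^ 2 / 8))) := by
    intro u ω hω
    set t := ⟪v - u, ω⟫ with ht
    set a := u + t • ω with ha
    set b := v - t • ω with hb
    have hE : ‖a‖ ^ 2 + ‖b‖ ^ 2 = ‖u‖ ^ 2 + ‖v‖ ^ 2 := GainAux.energy u v ω hω
    have hta : |t| ≤ (1 + ‖u‖ ^ 2) * (1 + ‖v‖ ^ 2) := by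
      have h1 : |t| ≤ ‖v - u‖ * ‖ω‖ := abs_real_inner_le_norm _ _
      rw [hω, mul_one] at h1
      have h2 : ‖v - u‖ ≤ ‖v‖ + ‖u‖ := norm_sub_le _ _
      nlinarith [sq_nonneg (‖u‖ - 1), sq_nonneg (‖v‖ - 1), sq_nonneg (‖u‖ * ‖v‖),
        norm_nonneg u, norm_nonneg v]
    have hga := hgabs a
    have hgb := hgabs b
    have e1 : (0:ℝ) ≤ Real.exp (-(‖a‖ ^ 2 / 4)) := (Real.exp_pos _).le
    have e2 : (0:ℝ) ≤ Real.exp (-(‖b‖ ^ 2 / 4)) := (Real.exp_pos _).le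
    have hX : (0:ℝ) ≤ (1 + ‖u‖ ^ 2) * (1 + ‖v‖ ^ 2) := by positivity
    rw [abs_mul, abs_mul, abs_mul, abs_mul, abs_abs, abs_of_pos (Real.exp_pos _),
      abs_of_pos (Real.exp_pos _)]
    have step1 : |t| * Real.exp (-(‖a‖ ^ 2 / 4)) * |g a| * Real.exp (-(‖b‖ ^ 2 / 4)) * |g b|
        ≤ ((1 + ‖u‖ ^ 2) * (1 + ‖v‖ ^ 2)) * Real.exp (-(‖a‖ ^ 2 / 4))
            * (M * Real.exp (-(ϑ * ‖a‖ ^ 2)))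
          * Real.exp (-(‖b‖ ^ 2 / 4)) * (M * Real.exp (-(ϑ * ‖b‖ ^ 2))) := by
      have hMea : (0:ℝ) ≤ M * Real.exp (-(ϑ * ‖a‖ ^ 2)) :=
        mul_nonneg hM0 (Real.exp_pos _).le
      have s1 : |t| * Real.exp (-(‖a‖ ^ 2 / 4))
          ≤ ((1 + ‖u‖ ^ 2) * (1 + ‖v‖ ^ 2)) * Real.exp (-(‖a‖ ^ 2 / 4)) :=
        mul_le_mul_of_nonneg_right hta e1
      have s2 := mul_le_mul s1 hga (abs_nonneg _) (mul_nonneg hX e1)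
      have s3 := mul_le_mul_of_nonneg_right s2 e2
      exact mul_le_mul s3 hgb (abs_nonneg _)
        (mul_nonneg (mul_nonneg (mul_nonneg hX e1) hMea) e2)
    refine le_trans step1 ?_
    have hcomb : Real.exp (-(‖a‖ ^ 2 / 4)) * Real.exp (-(ϑ * ‖a‖ ^ 2))
        * Real.exp (-(‖b‖ ^ 2 / 4)) * Real.exp (-(ϑ * ‖b‖ ^ 2))
        = Real.exp (-(‖v‖ ^ 2 / 4)) * Real.exp (-(ϑ * ‖v‖ ^ 2)) * Real.exp (-(‖u‖ ^ 2 / 4))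
          * Real.exp (-(ϑ * ‖u‖ ^ 2)) := by
      rw [← Real.exp_add, ← Real.exp_add, ← Real.exp_add, ← Real.exp_add, ← Real.exp_add,
        ← Real.exp_add]
      congr 1
      linear_combination (-(1/4 : ℝ) - ϑ) * hE
    have hexp1 : Real.exp (-(ϑ * ‖u‖ ^ 2)) ≤ 1 := by
      calc Real.exp (-(ϑ * ‖u‖ ^ 2)) ≤ Real.exp 0 :=
            Real.exp_le_exp.mpr (neg_nonpos.mpr (by positivity))
        _ = 1 := Real.exp_zero
    calc ((1 + ‖u‖ ^ 2) * (1 + ‖v‖ ^ 2)) * Real.exp (-(‖a‖ ^ 2 / 4))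
            * (M * Real.exp (-(ϑ * ‖a‖ ^ 2)))
          * Real.exp (-(‖b‖ ^ 2 / 4)) * (M * Real.exp (-(ϑ * ‖b‖ ^ 2)))
        = M ^ 2 * (1 + ‖v‖ ^ 2) * (Real.exp (-(‖a‖ ^ 2 / 4)) * Real.exp (-(ϑ * ‖a‖ ^ 2))
            * Real.exp (-(‖b‖ ^ 2 / 4)) * Real.exp (-(ϑ * ‖b‖ ^ 2))) * (1 + ‖u‖ ^ 2) := by
          ring
      _ = M ^ 2 * (1 + ‖v‖ ^ 2) * (Real.exp (-(‖v‖ ^ 2 / 4)) * Real.exp (-(ϑ * ‖v‖ ^ 2))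
            * Real.exp (-(‖u‖ ^ 2 / 4)) * Real.exp (-(ϑ * ‖u‖ ^ 2))) * (1 + ‖u‖ ^ 2) := by
          rw [hcomb]
      _ ≤ M ^ 2 * (1 + ‖v‖ ^ 2) * (Real.exp (-(‖v‖ ^ 2 / 4)) * Real.exp (-(ϑ * ‖v‖ ^ 2))
            * Real.exp (-(‖u‖ ^ 2 / 4)) * 1) * (1 + ‖u‖ ^ 2) := by
          gcongr
      _ = M ^ 2 * ((1 + ‖v‖ ^ 2) * Real.exp (-(ϑ * ‖v‖ ^ 2))) * Real.exp (-(‖v‖ ^ 2 / 4))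
            * ((1 + ‖u‖ ^ 2) * Real.exp (-(‖u‖ ^ 2 / 4))) := by ring
      _ ≤ M ^ 2 * ((1 + ‖v‖ ^ 2) * Real.exp (-(ϑ * ‖v‖ ^ 2))) * Real.exp (-(‖v‖ ^ 2 / 4))
            * (9 * Real.exp (-(‖u‖ ^ 2 / 8))) := by
          have := GainAux.boundU (‖u‖ ^ 2) (sq_nonneg _)
          gcongr
  -- measurability facts
  have hcont_t : Continuous fun p : E3 × E3 => ⟪v - p.1, p.2⟫ :=
    (continuous_const.sub continuous_fst).inner continuous_snd
  have hcont_a : Continuous fun p : E3 × E3 => p.1 + ⟪v - p.1, p.2⟫ • p.2 :=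
    continuous_fst.add (hcont_t.smul continuous_snd)
  have hcont_b : Continuous fun p : E3 × E3 => v - ⟪v - p.1, p.2⟫ • p.2 :=
    continuous_const.sub (hcont_t.smul continuous_snd)
  have hsmeas : MeasurableSet {p : E3 × E3 | 0 < ⟪v - p.1, p.2⟫} :=
    measurableSet_lt measurable_const hcont_t.measurable
  have hexp_a : Measurable fun p : E3 × E3 =>
      Real.exp (-(‖p.1 + ⟪v - p.1, p.2⟫ • p.2‖ ^ 2 / 4)) :=
    (Real.continuous_exp.comp (((hcont_a.norm.pow 2).div_const 4).neg)).measurable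
  have hexp_b : Measurable fun p : E3 × E3 =>
      Real.exp (-(‖v - ⟪v - p.1, p.2⟫ • p.2‖ ^ 2 / 4)) :=
    (Real.continuous_exp.comp (((hcont_b.norm.pow 2).div_const 4).neg)).measurable
  have hfmeas : Measurable fun p : E3 × E3 =>
      |⟪v - p.1, p.2⟫|
        * Real.exp (-(‖p.1 + ⟪v - p.1, p.2⟫ • p.2‖ ^ 2 / 4))
          * g (p.1 + ⟪v - p.1, p.2⟫ • p.2)
        * Real.exp (-(‖v - ⟪v - p.1, p.2⟫ • p.2‖ ^ 2 / 4))
          * g (v - ⟪v - p.1, p.2⟫ • p.2) :=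
    ((((hcont_t.abs.measurable).mul hexp_a).mul (hg.comp hcont_a.measurable)).mul hexp_b).mul
      (hg.comp hcont_b.measurable)
  -- a.e. statements about the sphere measure
  have hbad : sphMeas {ω : E3 | ¬ ‖ω‖ = 1} = 0 := by
    have hms : MeasurableSet {ω : E3 | ¬ ‖ω‖ = 1} :=
      (measurableSet_eq_fun continuous_norm.measurable measurable_const).compl
    rw [sphMeas, Measure.restrict_apply hms]
    have : {ω : E3 | ¬ ‖ω‖ = 1} ∩ Metric.sphere (0 : E3) 1 = ∅ := by
      ext ω
      simp [mem_sphere_zero_iff_norm]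
    rw [this]
    exact measure_empty
  have hsph_ae : ∀ᵐ ω ∂sphMeas, ‖ω‖ = 1 := by
    rw [ae_iff]; exact hbad
  have hprod_ae : ∀ᵐ p : E3 × E3 ∂((volume : Measure E3).prod sphMeas), ‖p.2‖ = 1 := by
    rw [ae_iff]
    have hset : {p : E3 × E3 | ¬ ‖p.2‖ = 1} = (univ : Set E3) ×ˢ {ω : E3 | ¬ ‖ω‖ = 1} := by
      ext p; simp
    rw [hset, Measure.prod_prod, hbad, mul_zero]
  -- integrable majorant on the product
  have hGint : Integrable (fun p : E3 × E3 =>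
      M ^ 2 * ((1 + ‖v‖ ^ 2) * Real.exp (-(ϑ * ‖v‖ ^ 2))) * Real.exp (-(‖v‖ ^ 2 / 4))
        * (9 * Real.exp (-(‖p.1‖ ^ 2 / 8)))) ((volume : Measure E3).prod sphMeas) := by
    have h1 : Integrable (fun u : E3 =>
        M ^ 2 * ((1 + ‖v‖ ^ 2) * Real.exp (-(ϑ * ‖v‖ ^ 2))) * Real.exp (-(‖v‖ ^ 2 / 4))
          * (9 * Real.exp (-(‖u‖ ^ 2 / 8)))) volume :=
      (GainAux.integrable_gauss8.const_mul 9).const_mul _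
    have h2 : Integrable (fun _ : E3 => (1:ℝ)) sphMeas := integrable_const _
    have h3 := h1.mul_prod h2
    simpa using h3
  have hInt : Integrable
      ({p : E3 × E3 | 0 < ⟪v - p.1, p.2⟫}.indicator fun p =>
        |⟪v - p.1, p.2⟫|
          * Real.exp (-(‖p.1 + ⟪v - p.1, p.2⟫ • p.2‖ ^ 2 / 4))
            * g (p.1 + ⟪v - p.1, p.2⟫ • p.2)
          * Real.exp (-(‖v - ⟪v - p.1, p.2⟫ • p.2‖ ^ 2 / 4))
            * g (v - ⟪v - p.1, p.2⟫ • p.2))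
      ((volume : Measure E3).prod sphMeas) := by
    refine Integrable.mono' hGint ((hfmeas.indicator hsmeas).aestronglyMeasurable) ?_
    filter_upwards [hprod_ae] with p hp
    by_cases hps : p ∈ {p : E3 × E3 | 0 < ⟪v - p.1, p.2⟫}
    · simp only [Set.indicator_of_mem hps, Real.norm_eq_abs]
      exact key p.1 p.2 hp
    · simp only [Set.indicator_of_notMem hps, norm_zero]
      positivity
  refine ⟨hInt, ?_⟩
  -- bound on the inner (sphere) integral
  have hinner : ∀ u : E3,
      |∫ ω in {ω : E3 | 0 < ⟪v - u, ω⟫},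
        (|⟪v - u, ω⟫|
          * Real.exp (-(‖u + ⟪v - u, ω⟫ • ω‖ ^ 2 / 4)) * g (u + ⟪v - u, ω⟫ • ω)
          * Real.exp (-(‖v - ⟪v - u, ω⟫ • ω‖ ^ 2 / 4)) * g (v - ⟪v - u, ω⟫ • ω)) ∂sphMeas|
      ≤ S * (M ^ 2 * ((1 + ‖v‖ ^ 2) * Real.exp (-(ϑ * ‖v‖ ^ 2))) * Real.exp (-(‖v‖ ^ 2 / 4)) * 9)
          * Real.exp (-(‖u‖ ^ 2 / 8)) := by
    intro u
    have hsu : MeasurableSet {ω : E3 | 0 < ⟪v - u, ω⟫} :=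
      measurableSet_lt measurable_const ((continuous_const.inner continuous_id).measurable)
    rw [← integral_indicator hsu]
    have hc : Integrable (fun _ : E3 =>
        M ^ 2 * ((1 + ‖v‖ ^ 2) * Real.exp (-(ϑ * ‖v‖ ^ 2))) * Real.exp (-(‖v‖ ^ 2 / 4))
          * (9 * Real.exp (-(‖u‖ ^ 2 / 8)))) sphMeas := integrable_const _
    have hbnd : ∀ᵐ ω ∂sphMeas,
        ‖({ω : E3 | 0 < ⟪v - u, ω⟫}.indicator fun ω =>
          |⟪v - u, ω⟫|
            * Real.exp (-(‖u + ⟪v - u, ω⟫ • ω‖ ^ 2 / 4)) * g (u + ⟪v - u, ω⟫ • ω)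
            * Real.exp (-(‖v - ⟪v - u, ω⟫ • ω‖ ^ 2 / 4)) * g (v - ⟪v - u, ω⟫ • ω)) ω‖
        ≤ M ^ 2 * ((1 + ‖v‖ ^ 2) * Real.exp (-(ϑ * ‖v‖ ^ 2))) * Real.exp (-(‖v‖ ^ 2 / 4))
            * (9 * Real.exp (-(‖u‖ ^ 2 / 8))) := by
      filter_upwards [hsph_ae] with ω hω
      by_cases hm : ω ∈ {ω : E3 | 0 < ⟪v - u, ω⟫}
      · simp only [Set.indicator_of_mem hm, Real.norm_eq_abs]
        exact key u ω hω
      · simp only [Set.indicator_of_notMem hm, norm_zero]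
        positivity
    calc |∫ ω, ({ω : E3 | 0 < ⟪v - u, ω⟫}.indicator fun ω =>
            |⟪v - u, ω⟫|
              * Real.exp (-(‖u + ⟪v - u, ω⟫ • ω‖ ^ 2 / 4)) * g (u + ⟪v - u, ω⟫ • ω)
              * Real.exp (-(‖v - ⟪v - u, ω⟫ • ω‖ ^ 2 / 4)) * g (v - ⟪v - u, ω⟫ • ω)) ω ∂sphMeas|
        ≤ ∫ _ : E3, (M ^ 2 * ((1 + ‖v‖ ^ 2) * Real.exp (-(ϑ * ‖v‖ ^ 2)))
            * Real.exp (-(‖v‖ ^ 2 / 4)) * (9 * Real.exp (-(‖u‖ ^ 2 / 8)))) ∂sphMeas := by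
          rw [← Real.norm_eq_abs]
          exact norm_integral_le_of_norm_le hc hbnd
      _ = S * (M ^ 2 * ((1 + ‖v‖ ^ 2) * Real.exp (-(ϑ * ‖v‖ ^ 2))) * Real.exp (-(‖v‖ ^ 2 / 4))
            * 9) * Real.exp (-(‖u‖ ^ 2 / 8)) := by
          rw [integral_const, smul_eq_mul, hS, measureReal_def]; ring
  -- bound on the outer integral
  have houter :
      |∫ u : E3, (∫ ω in {ω : E3 | 0 < ⟪v - u, ω⟫},
        (|⟪v - u, ω⟫|
          * Real.exp (-(‖u + ⟪v - u, ω⟫ • ω‖ ^ 2 / 4)) * g (u + ⟪v - u, ω⟫ • ω)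
          * Real.exp (-(‖v - ⟪v - u, ω⟫ • ω‖ ^ 2 / 4)) * g (v - ⟪v - u, ω⟫ • ω)) ∂sphMeas)|
      ≤ S * (M ^ 2 * ((1 + ‖v‖ ^ 2) * Real.exp (-(ϑ * ‖v‖ ^ 2))) * Real.exp (-(‖v‖ ^ 2 / 4)) * 9)
          * A := by
    have hIb : Integrable (fun u : E3 =>
        S * (M ^ 2 * ((1 + ‖v‖ ^ 2) * Real.exp (-(ϑ * ‖v‖ ^ 2))) * Real.exp (-(‖v‖ ^ 2 / 4)) * 9)
          * Real.exp (-(‖u‖ ^ 2 / 8))) volume :=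
      GainAux.integrable_gauss8.const_mul _
    calc |∫ u : E3, (∫ ω in {ω : E3 | 0 < ⟪v - u, ω⟫},
            (|⟪v - u, ω⟫|
              * Real.exp (-(‖u + ⟪v - u, ω⟫ • ω‖ ^ 2 / 4)) * g (u + ⟪v - u, ω⟫ • ω)
              * Real.exp (-(‖v - ⟪v - u, ω⟫ • ω‖ ^ 2 / 4)) * g (v - ⟪v - u, ω⟫ • ω)) ∂sphMeas)|
        ≤ ∫ u : E3, (S * (M ^ 2 * ((1 + ‖v‖ ^ 2) * Real.exp (-(ϑ * ‖v‖ ^ 2)))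
            * Real.exp (-(‖v‖ ^ 2 / 4)) * 9) * Real.exp (-(‖u‖ ^ 2 / 8))) := by
          rw [← Real.norm_eq_abs]
          refine norm_integral_le_of_norm_le hIb (Filter.Eventually.of_forall fun u => ?_)
          rw [Real.norm_eq_abs]
          exact hinner u
      _ = S * (M ^ 2 * ((1 + ‖v‖ ^ 2) * Real.exp (-(ϑ * ‖v‖ ^ 2))) * Real.exp (-(‖v‖ ^ 2 / 4))
            * 9) * A := by
          rw [integral_const_mul, hA]
  -- conclusion
  have hee : Real.exp (‖v‖ ^ 2 / 4) * Real.exp (-(‖v‖ ^ 2 / 4)) = 1 := by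
    rw [← Real.exp_add]; simp
  have hBvle : (1 + ‖v‖ ^ 2) * Real.exp (-(ϑ * ‖v‖ ^ 2)) ≤ (ϑ + 1)/ϑ :=
    GainAux.boundTheta ϑ (‖v‖ ^ 2) hϑ0 (sq_nonneg _)
  have hBv0 : (0:ℝ) ≤ (1 + ‖v‖ ^ 2) * Real.exp (-(ϑ * ‖v‖ ^ 2)) := by positivity
  rw [gainOp, abs_mul, abs_of_pos (Real.exp_pos _)]
  calc Real.exp (‖v‖ ^ 2 / 4) *
        |∫ u : E3, (∫ ω in {ω : E3 | 0 < ⟪v - u, ω⟫},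
          (|⟪v - u, ω⟫|
            * Real.exp (-(‖u + ⟪v - u, ω⟫ • ω‖ ^ 2 / 4)) * g (u + ⟪v - u, ω⟫ • ω)
            * Real.exp (-(‖v - ⟪v - u, ω⟫ • ω‖ ^ 2 / 4)) * g (v - ⟪v - u, ω⟫ • ω)) ∂sphMeas)|
      ≤ Real.exp (‖v‖ ^ 2 / 4) *
          (S * (M ^ 2 * ((1 + ‖v‖ ^ 2) * Real.exp (-(ϑ * ‖v‖ ^ 2)))
            * Real.exp (-(‖v‖ ^ 2 / 4)) * 9) * A) :=
        mul_le_mul_of_nonneg_left houter (Real.exp_pos _).le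
    _ = S * (9 * A) * ((1 + ‖v‖ ^ 2) * Real.exp (-(ϑ * ‖v‖ ^ 2))) * M ^ 2
          * (Real.exp (‖v‖ ^ 2 / 4) * Real.exp (-(‖v‖ ^ 2 / 4))) := by ring
    _ = S * (9 * A) * ((1 + ‖v‖ ^ 2) * Real.exp (-(ϑ * ‖v‖ ^ 2))) * M ^ 2 := by
        rw [hee, mul_one]
    _ ≤ S * (9 * A) * ((ϑ + 1)/ϑ) * M ^ 2 := by
        refine mul_le_mul_of_nonneg_right ?_ (sq_nonneg M)
        exact mul_le_mul_of_nonneg_left hBvle (mul_nonneg hS0 (by linarith))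
    _ ≤ (S * (9 * A) * ((ϑ + 1)/ϑ) + 1) * M ^ 2 := by nlinarith [sq_nonneg M]

end
end

section
/- Exponentially damped logarithmic time integral (key calculus estimate in the proof of Lemma 5.7). There exists a universal constant C > 0 such that for all λ > 0, b > 0 and T ≥ 0: ∫₀^T e^{−λ(T−s)} ln( 1 + 1/(b(T−s)) ) ds ≤ (C/λ) · ( ln(1 + λ/b) + 1 ). -/
open MeasureTheory Set

lemma log_one_add_le_two_sqrt {x : ℝ} (hx : 0 ≤ x) :
    Real.log (1 + x) ≤ 2 * Real.sqrt x := by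
  have h1x : (0:ℝ) < 1 + x := by linarith
  have h1 : Real.log (1 + x) = 2 * Real.log (Real.sqrt (1 + x)) := by
    rw [Real.log_sqrt (by linarith)]; ring
  have h2 : Real.log (Real.sqrt (1 + x)) ≤ Real.sqrt (1 + x) - 1 :=
    Real.log_le_sub_one_of_pos (Real.sqrt_pos.mpr h1x)
  have h3 : Real.sqrt (1 + x) ≤ 1 + Real.sqrt x := by
    have hsq : (1:ℝ) + x ≤ (1 + Real.sqrt x) ^ 2 := by
      nlinarith [Real.sq_sqrt hx, Real.sqrt_nonneg x]
    calc Real.sqrt (1 + x) ≤ Real.sqrt ((1 + Real.sqrt x) ^ 2) := Real.sqrt_le_sqrt hsq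
      _ = 1 + Real.sqrt x := Real.sqrt_sq (by positivity)
  linarith

lemma log_one_add_mul_le {x y : ℝ} (hx : 0 ≤ x) (hy : 0 ≤ y) :
    Real.log (1 + x * y) ≤ Real.log (1 + x) + Real.log (1 + y) := by
  have h : (1:ℝ) + x * y ≤ (1 + x) * (1 + y) := by nlinarith
  calc Real.log (1 + x * y) ≤ Real.log ((1 + x) * (1 + y)) :=
        Real.log_le_log (by positivity) h
    _ = Real.log (1 + x) + Real.log (1 + y) :=
        Real.log_mul (by positivity) (by positivity)

/-- **Key calculus estimate in the proof of Lemma 5.7** (exponentially damped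
logarithmic time integral). There is a universal constant `C > 0` such that for all
`λ > 0`, `b > 0` and `T ≥ 0`,
`∫₀^T e^{−λ(T−s)} ln(1 + 1/(b(T−s))) ds ≤ (C/λ)(ln(1 + λ/b) + 1)`. -/
theorem damped_log_time_integral :
    ∃ C > (0 : ℝ), ∀ lam b T : ℝ, 0 < lam → 0 < b → 0 ≤ T →
      (∫ s in (0 : ℝ)..T,
          Real.exp (-(lam * (T - s))) * Real.log (1 + 1 / (b * (T - s))))
        ≤ C / lam * (Real.log (1 + lam / b) + 1) := by
  refine ⟨2 * Real.sqrt Real.pi + 1, by positivity, ?_⟩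
  intro lam b T hlam hb hT
  set L := Real.log (1 + lam / b) with hL
  have hL0 : 0 ≤ L := Real.log_nonneg (by
    have : 0 ≤ lam / b := by positivity
    linarith)
  set f : ℝ → ℝ := fun u => Real.exp (-(lam * u)) * Real.log (1 + 1 / (b * u)) with hf
  set g : ℝ → ℝ := fun u =>
      L * (u ^ ((1:ℝ) - 1) * Real.exp (-(lam * u)))
        + (2 * lam ^ (-(1/2) : ℝ)) * (u ^ ((1/2:ℝ) - 1) * Real.exp (-(lam * u))) with hg
  -- change of variables u = T - s
  have key : (∫ s in (0:ℝ)..T,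
        Real.exp (-(lam * (T - s))) * Real.log (1 + 1 / (b * (T - s))))
      = ∫ u in (0:ℝ)..T, f u := by
    have h0 := intervalIntegral.integral_comp_sub_left (a := (0:ℝ)) (b := T) f T
    simp only [sub_zero, sub_self] at h0
    exact h0
  rw [key, intervalIntegral.integral_of_le hT]
  -- integrability of the two pieces of g on Ioi 0
  have hg1 : IntegrableOn (fun u : ℝ => u ^ ((1:ℝ) - 1) * Real.exp (-(lam * u))) (Ioi 0) := by
    have := exp_neg_integrableOn_Ioi 0 hlam
    refine this.congr_fun (fun x hx => ?_) measurableSet_Ioi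
    simp [Real.rpow_zero, neg_mul]
  have hg2 : IntegrableOn (fun u : ℝ => u ^ ((1/2:ℝ) - 1) * Real.exp (-(lam * u))) (Ioi 0) := by
    have := integrableOn_rpow_mul_exp_neg_mul_rpow
      (s := -(1/2)) (p := 1) (by norm_num) one_pos hlam
    refine this.congr_fun (fun x hx => ?_) measurableSet_Ioi
    norm_num [Real.rpow_one, neg_mul]
  have hgint : IntegrableOn g (Ioi 0) := (hg1.const_mul L).add (hg2.const_mul _)
  -- nonnegativity of g on Ioi 0
  have hgnn : ∀ u ∈ Ioi (0:ℝ), 0 ≤ g u := by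
    intro u hu
    have hu0 : (0:ℝ) < u := hu
    have h1 : (0:ℝ) ≤ u ^ ((1:ℝ) - 1) * Real.exp (-(lam * u)) := by positivity
    have h2 : (0:ℝ) ≤ u ^ ((1/2:ℝ) - 1) * Real.exp (-(lam * u)) := by positivity
    have h3 : (0:ℝ) ≤ 2 * lam ^ (-(1/2) : ℝ) := by positivity
    exact add_nonneg (mul_nonneg hL0 h1) (mul_nonneg h3 h2)
  -- pointwise bound f ≤ g on Ioc 0 T
  have hpoint : ∀ u ∈ Ioc (0:ℝ) T, f u ≤ g u := by
    intro u hu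
    have hu0 : (0:ℝ) < u := hu.1
    have hexp : (0:ℝ) < Real.exp (-(lam * u)) := Real.exp_pos _
    have hsplit : (1:ℝ) / (b * u) = (lam / b) * (1 / (lam * u)) := by
      field_simp
    have hlog1 : Real.log (1 + 1 / (b * u)) ≤ L + Real.log (1 + 1 / (lam * u)) := by
      rw [hsplit]
      exact log_one_add_mul_le (by positivity) (by positivity)
    have hlog2 : Real.log (1 + 1 / (lam * u)) ≤ 2 * Real.sqrt (1 / (lam * u)) :=
      log_one_add_le_two_sqrt (by positivity)
    have hsq : Real.sqrt (1 / (lam * u)) = lam ^ (-(1/2) : ℝ) * u ^ ((1/2:ℝ) - 1) := by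
      rw [Real.sqrt_eq_rpow, one_div, Real.inv_rpow (by positivity),
        Real.mul_rpow hlam.le hu0.le, mul_inv, ← Real.rpow_neg hlam.le, ← Real.rpow_neg hu0.le]
      norm_num
    have hlog : Real.log (1 + 1 / (b * u))
        ≤ L + 2 * lam ^ (-(1/2) : ℝ) * u ^ ((1/2:ℝ) - 1) := by
      rw [hsq] at hlog2
      calc Real.log (1 + 1 / (b * u)) ≤ L + Real.log (1 + 1 / (lam * u)) := hlog1
        _ ≤ L + 2 * (lam ^ (-(1/2) : ℝ) * u ^ ((1/2:ℝ) - 1)) := by linarith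
        _ = L + 2 * lam ^ (-(1/2) : ℝ) * u ^ ((1/2:ℝ) - 1) := by ring
    have : f u ≤ Real.exp (-(lam * u)) *
        (L + 2 * lam ^ (-(1/2) : ℝ) * u ^ ((1/2:ℝ) - 1)) :=
      mul_le_mul_of_nonneg_left hlog hexp.le
    calc f u ≤ Real.exp (-(lam * u)) *
          (L + 2 * lam ^ (-(1/2) : ℝ) * u ^ ((1/2:ℝ) - 1)) := this
      _ = g u := by
          show _ = L * (u ^ ((1:ℝ) - 1) * Real.exp (-(lam * u)))
            + (2 * lam ^ (-(1/2) : ℝ)) * (u ^ ((1/2:ℝ) - 1) * Real.exp (-(lam * u)))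
          rw [show ((1:ℝ) - 1) = 0 by norm_num, Real.rpow_zero]
          ring
  -- integrability of f on Ioc 0 T
  have hfmeas : AEStronglyMeasurable f (volume.restrict (Ioc 0 T)) := by
    apply Measurable.aestronglyMeasurable
    exact (Real.measurable_exp.comp ((measurable_const.mul measurable_id).neg)).mul
      (Real.measurable_log.comp
        (measurable_const.add ((measurable_const.mul measurable_id).inv.const_mul 1)))
  have hfint : IntegrableOn f (Ioc 0 T) := by
    refine Integrable.mono' (hgint.mono_set Ioc_subset_Ioi_self) hfmeas ?_
    filter_upwards [ae_restrict_mem measurableSet_Ioc] with u hu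
    have hu0 : (0:ℝ) < u := hu.1
    have hfnn : 0 ≤ f u := by
      have : (0:ℝ) ≤ Real.log (1 + 1 / (b * u)) :=
        Real.log_nonneg (by
          have : (0:ℝ) ≤ 1 / (b * u) := by positivity
          linarith)
      have := Real.exp_pos (-(lam * u))
      simp only [hf]
      positivity
    rw [Real.norm_eq_abs, abs_of_nonneg hfnn]
    exact hpoint u hu
  -- main chain of inequalities
  have step1 : (∫ u in Ioc (0:ℝ) T, f u) ≤ ∫ u in Ioc (0:ℝ) T, g u :=
    setIntegral_mono_on hfint (hgint.mono_set Ioc_subset_Ioi_self) measurableSet_Ioc hpoint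
  have step2 : (∫ u in Ioc (0:ℝ) T, g u) ≤ ∫ u in Ioi (0:ℝ), g u := by
    refine setIntegral_mono_set hgint ?_ (HasSubset.Subset.eventuallyLE Ioc_subset_Ioi_self)
    filter_upwards [ae_restrict_mem measurableSet_Ioi] with u hu
    exact hgnn u hu
  have hval1 : (∫ u in Ioi (0:ℝ), u ^ ((1:ℝ) - 1) * Real.exp (-(lam * u))) = 1 / lam := by
    rw [Real.integral_rpow_mul_exp_neg_mul_Ioi one_pos hlam]
    simp [Real.Gamma_one]
  have hval2 : (∫ u in Ioi (0:ℝ), u ^ ((1/2:ℝ) - 1) * Real.exp (-(lam * u)))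
      = (1 / lam) ^ (1/2 : ℝ) * Real.sqrt Real.pi := by
    rw [Real.integral_rpow_mul_exp_neg_mul_Ioi (by norm_num) hlam, Real.Gamma_one_half_eq]
  have step3 : (∫ u in Ioi (0:ℝ), g u)
      = L * (1 / lam) + (2 * lam ^ (-(1/2) : ℝ)) * ((1 / lam) ^ (1/2 : ℝ) * Real.sqrt Real.pi) := by
    simp only [hg]
    rw [integral_add ((hg1.const_mul L)) ((hg2.const_mul _)),
      integral_const_mul, integral_const_mul, hval1, hval2]
  have hpow : lam ^ (-(1/2) : ℝ) * (1 / lam) ^ (1/2 : ℝ) = 1 / lam := by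
    have h1 : ((1:ℝ)/lam) ^ ((1/2):ℝ) = lam ^ (-(1/2):ℝ) := by
      rw [Real.rpow_neg hlam.le, ← Real.inv_rpow hlam.le]
      congr 1
      exact one_div lam
    rw [h1, ← Real.rpow_add hlam, show (-(1/2) + -(1/2) : ℝ) = -1 by norm_num,
      Real.rpow_neg_one]
    exact (one_div lam).symm
  have step4 : (∫ u in Ioi (0:ℝ), g u) = L / lam + 2 * Real.sqrt Real.pi / lam := by
    have h2' : (2 * lam ^ (-(1/2) : ℝ)) * ((1 / lam) ^ (1/2 : ℝ) * Real.sqrt Real.pi)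
        = 2 * Real.sqrt Real.pi / lam := by
      rw [show (2 * lam ^ (-(1/2) : ℝ)) * ((1 / lam) ^ (1/2 : ℝ) * Real.sqrt Real.pi)
          = 2 * Real.sqrt Real.pi * (lam ^ (-(1/2) : ℝ) * (1 / lam) ^ (1/2 : ℝ)) from by ring,
        hpow]
      ring
    rw [step3, h2']
    ring
  have hfinal : L / lam + 2 * Real.sqrt Real.pi / lam
      ≤ (2 * Real.sqrt Real.pi + 1) / lam * (L + 1) := by
    have hs : (0:ℝ) ≤ Real.sqrt Real.pi := Real.sqrt_nonneg _
    have hineq : L + 2 * Real.sqrt Real.pi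
        ≤ (2 * Real.sqrt Real.pi + 1) * (L + 1) := by nlinarith
    have e1 : L / lam + 2 * Real.sqrt Real.pi / lam
        = (L + 2 * Real.sqrt Real.pi) / lam := by ring
    have e2 : (2 * Real.sqrt Real.pi + 1) / lam * (L + 1)
        = ((2 * Real.sqrt Real.pi + 1) * (L + 1)) / lam := by ring
    rw [e1, e2]
    gcongr
  calc (∫ u in Ioc (0:ℝ) T, f u) ≤ ∫ u in Ioi (0:ℝ), g u := step1.trans step2
    _ = L / lam + 2 * Real.sqrt Real.pi / lam := step4
    _ ≤ (2 * Real.sqrt Real.pi + 1) / lam * (L + 1) := hfinal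
end
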